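/- Let 𝓕 be a complete polyhedral fan in ℝ^n, let C_1, C_2, ..., C_r ∈ 𝓕 be cones with ⋂_{i=1}^r C_i = C, let S(C) be the linear span of C, and let π : ℝ^n → ℝ^n be the orthogonal projection onto the orthogonal complement S(C)^⊥. Then π(⋂_{i=1}^r C_i) = ⋂_{i=1}^r π(C_i). -/

import Mathlib

open scoped RealInnerProductSpace

/-- A (convex polyhedral) cone in `ℝ^n`: nonnegative combinations of finitely many vectors. -/
def IsPolyhedralCone {n : ℕ} (C : Set (EuclideanSpace ℝ (Fin n))) : Prop :=
  ∃ (k : ℕ) (v : Fin k → EuclideanSpace ℝ (Fin n)),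
    C = {x | ∃ lam : Fin k → ℝ, (∀ i, 0 ≤ lam i) ∧ x = ∑ i, lam i • v i}

/-- `F` is a face of the cone `C`. -/
def IsFaceOf {n : ℕ} (F C : Set (EuclideanSpace ℝ (Fin n))) : Prop :=
  F = C ∨ ∃ u : EuclideanSpace ℝ (Fin n),
    (∀ x ∈ C, ⟪u, x⟫ ≤ 0) ∧ F = C ∩ {x | ⟪u, x⟫ = 0}

/-- The dimension of a cone: the dimension of its linear span. -/
noncomputable def coneDim {n : ℕ} (C : Set (EuclideanSpace ℝ (Fin n))) : ℕ :=
  Module.finrank ℝ (Submodule.span ℝ C)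

/-- A facet of `C` is a face of dimension `dim C - 1`. -/
def IsFacetOf {n : ℕ} (σ C : Set (EuclideanSpace ℝ (Fin n))) : Prop :=
  IsFaceOf σ C ∧ coneDim σ + 1 = coneDim C

/-- The polar of a cone. -/
def polarCone {n : ℕ} (C : Set (EuclideanSpace ℝ (Fin n))) :
    Set (EuclideanSpace ℝ (Fin n)) :=
  {u | ∀ x ∈ C, ⟪u, x⟫ ≤ 0}

/-- A complete polyhedral fan in `ℝ^n`. -/
def IsCompleteFan {n : ℕ} (𝓕 : Set (Set (EuclideanSpace ℝ (Fin n)))) : Prop :=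
  𝓕.Finite ∧ (∀ C ∈ 𝓕, IsPolyhedralCone C) ∧
    (∀ C ∈ 𝓕, ∀ F, IsFaceOf F C → F ∈ 𝓕) ∧
    (∀ C ∈ 𝓕, ∀ C' ∈ 𝓕, IsFaceOf (C ∩ C') C ∧ IsFaceOf (C ∩ C') C') ∧
    ⋃₀ 𝓕 = Set.univ

/-- Right-hand side of the toric differential inclusion given by `𝓕` and `δ`. -/
noncomputable def toricRHS {n : ℕ} (𝓕 : Set (Set (EuclideanSpace ℝ (Fin n))))
    (δ : ℝ) (X : EuclideanSpace ℝ (Fin n)) : Set (EuclideanSpace ℝ (Fin n)) :=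
  polarCone (⋂₀ {C | C ∈ 𝓕 ∧ Metric.infDist X C ≤ δ})

/-- The quasi-toric differential inclusion given by `𝓕` and `d` is well-defined. -/
def QTDIWellDefined {n : ℕ} (𝓕 : Set (Set (EuclideanSpace ℝ (Fin n))))
    (d : Fin n → ℝ) : Prop :=
  ∀ C ∈ 𝓕, ∀ C' ∈ 𝓕, ∀ X : EuclideanSpace ℝ (Fin n),
    ∀ (hk : coneDim C < n) (hm : coneDim C' < n),
      Metric.infDist X C ≤ d ⟨coneDim C, hk⟩ →
      Metric.infDist X C' ≤ d ⟨coneDim C', hm⟩ →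
      ∃ hh : coneDim (C ∩ C') < n,
        Metric.infDist X (C ∩ C') ≤ d ⟨coneDim (C ∩ C'), hh⟩

lemma fan_inter_mem {n : ℕ} {𝓕 : Set (Set (EuclideanSpace ℝ (Fin n)))}
    (h𝓕 : IsCompleteFan 𝓕) {A B : Set (EuclideanSpace ℝ (Fin n))}
    (hA : A ∈ 𝓕) (hB : B ∈ 𝓕) : A ∩ B ∈ 𝓕 :=
  h𝓕.2.2.1 A hA _ (h𝓕.2.2.2.1 A hA B hB).1

lemma fan_iInter_mem {n : ℕ} {𝓕 : Set (Set (EuclideanSpace ℝ (Fin n)))}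
    (h𝓕 : IsCompleteFan 𝓕) :
    ∀ (m : ℕ) (C : Fin (m+1) → Set (EuclideanSpace ℝ (Fin n))),
      (∀ i, C i ∈ 𝓕) → (⋂ i, C i) ∈ 𝓕 := by
  intro m
  induction m with
  | zero =>
      intro C hC
      have : ⋂ i, C i = C 0 := by
        ext x; simp [Fin.forall_fin_one]
      rw [this]; exact hC 0
  | succ m ih =>
      intro C hC
      have hsplit : ⋂ i, C i
          = (⋂ i : Fin (m+1), C i.castSucc) ∩ C (Fin.last (m+1)) := by
        ext x; simp [Set.mem_iInter, Fin.forall_fin_succ']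
      rw [hsplit]
      exact fan_inter_mem h𝓕 (ih _ fun i => hC _) (hC _)

lemma poly_add_mem {n : ℕ} {K : Set (EuclideanSpace ℝ (Fin n))}
    (h : IsPolyhedralCone K) {a b : EuclideanSpace ℝ (Fin n)}
    (ha : a ∈ K) (hb : b ∈ K) : a + b ∈ K := by
  obtain ⟨k, v, rfl⟩ := h
  obtain ⟨lam, hlam, rfl⟩ := ha
  obtain ⟨lam', hlam', rfl⟩ := hb
  exact ⟨lam + lam', fun i => add_nonneg (hlam i) (hlam' i), by
    simp [add_smul, Finset.sum_add_distrib]⟩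

/-- Orthogonal projection onto `S(C)ᗮ` commutes with the intersection
of cones of a fan whose intersection is `C`. -/
theorem proj_inter_eq_inter_proj {n r : ℕ} (hr : 0 < r)
    (𝓕 : Set (Set (EuclideanSpace ℝ (Fin n)))) (h𝓕 : IsCompleteFan 𝓕)
    (C : Fin r → Set (EuclideanSpace ℝ (Fin n))) (hCmem : ∀ i, C i ∈ 𝓕)
    (D : Set (EuclideanSpace ℝ (Fin n))) (hD : ⋂ i, C i = D)
    (π : EuclideanSpace ℝ (Fin n) → EuclideanSpace ℝ (Fin n))
    (hπ : ∀ x, π x = (Submodule.orthogonalProjectionOnto (Submodule.span ℝ D)ᗮ x :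
      EuclideanSpace ℝ (Fin n))) :
    π '' (⋂ i, C i) = ⋂ i, π '' (C i) := by
  subst hD
  obtain ⟨m, rfl⟩ := Nat.exists_eq_succ_of_ne_zero hr.ne'
  set D := ⋂ i, C i with hDdef
  have hDmem : D ∈ 𝓕 := fan_iInter_mem h𝓕 m C hCmem
  obtain ⟨k, v, hDv⟩ := h𝓕.2.1 D hDmem
  -- span D = span (range v)
  have hrange : Set.range v ⊆ D := by
    rintro _ ⟨j, rfl⟩
    rw [hDv]
    refine ⟨fun i => if i = j then 1 else 0, fun i => by positivity, ?_⟩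
    simp [ite_smul]
  have hspan : Submodule.span ℝ D = Submodule.span ℝ (Set.range v) := by
    apply le_antisymm
    · rw [Submodule.span_le]
      intro x hx
      rw [hDv] at hx
      obtain ⟨lam, _, rfl⟩ := hx
      exact Submodule.sum_mem _ fun i _ =>
        Submodule.smul_mem _ _ (Submodule.subset_span ⟨i, rfl⟩)
    · exact Submodule.span_mono hrange
  set W := (Submodule.span ℝ D)ᗮ with hW
  apply Set.Subset.antisymm
  · exact Set.image_iInter_subset _ _
  -- hard direction
  intro y hy
  simp only [Set.mem_iInter, Set.mem_image] at hy
  choose x hx hxy using hy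
  have hyW : y ∈ W := by
    rw [← hxy 0, hπ]
    exact SetLike.coe_mem _
  have hz : ∀ i, x i - y ∈ Submodule.span ℝ D := by
    intro i
    have h1 : x i - y ∈ Wᗮ := by
      rw [← hxy i, hπ]
      exact W.sub_starProjection_mem_orthogonal (x i)
    rwa [hW, Submodule.orthogonal_orthogonal] at h1
  have hz' : ∀ i, ∃ μ : Fin k → ℝ, ∑ j, μ j • v j = x i - y := by
    intro i
    have := hz i
    rw [hspan] at this
    exact Submodule.mem_span_range_iff_exists_fun ℝ |>.mp this
  choose μ hμ using hz'
  set t : ℝ := ∑ i, ∑ j, |μ i j| with ht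
  have htμ : ∀ i j, μ i j ≤ t := by
    intro i j
    calc μ i j ≤ |μ i j| := le_abs_self _
    _ ≤ ∑ j, |μ i j| := Finset.single_le_sum (f := fun j => |μ i j|) (fun j _ => abs_nonneg _) (Finset.mem_univ j)
    _ ≤ t := Finset.single_le_sum
        (f := fun i => ∑ j, |μ i j|)
        (fun i _ => Finset.sum_nonneg fun j _ => abs_nonneg _) (Finset.mem_univ i)
  set w : EuclideanSpace ℝ (Fin n) := ∑ j, v j with hw
  have hwD : w ∈ Submodule.span ℝ D :=
    Submodule.sum_mem _ fun j _ => Submodule.subset_span (hrange ⟨j, rfl⟩)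
  set X : EuclideanSpace ℝ (Fin n) := y + t • w with hX
  have hXmem : ∀ i, X ∈ C i := by
    intro i
    have hdiff : t • w - (x i - y) ∈ D := by
      rw [hDv]
      refine ⟨fun j => t - μ i j, fun j => sub_nonneg.mpr (htμ i j), ?_⟩
      simp [sub_smul, Finset.sum_sub_distrib, hμ, hw, Finset.smul_sum]
    have hXeq : X = x i + (t • w - (x i - y)) := by
      rw [hX]; abel
    rw [hXeq]
    rw [hDdef] at hdiff
    exact poly_add_mem (h𝓕.2.1 _ (hCmem i)) (hx i) (Set.mem_iInter.mp hdiff i)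
  refine ⟨X, Set.mem_iInter.mpr hXmem, ?_⟩
  rw [hπ, hX]
  have htwW : t • w ∈ Wᗮ := by
    rw [hW, Submodule.orthogonal_orthogonal]
    exact Submodule.smul_mem _ _ hwD
  rw [map_add, Submodule.coe_add,
    (Submodule.starProjection_apply W y).symm.trans (Submodule.starProjection_eq_self_iff.mpr hyW),
    Submodule.orthogonalProjectionOnto_apply_of_mem_orthogonal htwW]
  simp
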